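/- Let σ, z ∈ ℝ with σ ≠ 1 and z ≠ 1. Let F : ℝ² → ℝ be continuous, continuously differentiable in its second variable, with F(u,v) = 0 unless 1 ≤ u ≤ v, and suppose |F(u,v)| ≤ v^{−σ} u^{−z} and |v · ∂_v F(u,v)| ≤ v^{−σ} u^{−z} for all 1 ≤ u ≤ v. Define T(u,v) = ∫_1^u (F(u',v) − F(u',u)) du' + ∫_u^v F(u,v') dv' (this is the time derivative ∂_tψ = ∂_uψ + ∂_vψ of ψ(u,v) = ∫_1^u ∫_u^v F dv' du'). Then there is a constant C depending only on σ and z such that |T(u,v)| ≤ C · (v − u) · v^{−1} · u^{1 + max(0, 1−z)} · (u^{1−σ} + v^{1−σ}) for all 1 ≤ u ≤ v. -/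

import Mathlib

open Real Set intervalIntegral MeasureTheory

private lemma rpow_between' {a b s e : ℝ} (ha : 0 < a) (has : a ≤ s) (hsb : s ≤ b) :
    s ^ e ≤ a ^ e + b ^ e := by
  rcases le_or_gt e 0 with he | he
  · have h1 : s ^ e ≤ a ^ e := Real.rpow_le_rpow_of_nonpos ha has he
    have h2 : 0 ≤ b ^ e := Real.rpow_nonneg (by linarith) e
    linarith
  · have h1 : s ^ e ≤ b ^ e := Real.rpow_le_rpow (by linarith) hsb he.le
    have h2 : 0 ≤ a ^ e := Real.rpow_nonneg ha.le e
    linarith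

/-- Pointwise bound for the time derivative
`∂_tψ(u,v) = ∫_1^u (F(u',v) - F(u',u)) du' + ∫_u^v F(u,v') dv'`
of the solution of `∂_u∂_vψ = F` with trivial data, for a continuous source supported in
`{1 ≤ u ≤ v}`, continuously differentiable in the second variable, with
`|F(u,v)| ≤ v^{-σ} u^{-z}` and `|v ∂_vF(u,v)| ≤ v^{-σ} u^{-z}`.
The constant depends only on `σ` and `z`. -/
theorem stmt_6 (σ z : ℝ) (hσ : σ ≠ 1) (hz : z ≠ 1) :
    ∃ C : ℝ, ∀ F : ℝ → ℝ → ℝ,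
      Continuous (fun p : ℝ × ℝ => F p.1 p.2) →
      (∀ u : ℝ, ContDiff ℝ 1 (fun v : ℝ => F u v)) →
      (∀ u v : ℝ, ¬(1 ≤ u ∧ u ≤ v) → F u v = 0) →
      (∀ u v : ℝ, 1 ≤ u → u ≤ v → |F u v| ≤ v ^ (-σ) * u ^ (-z)) →
      (∀ u v : ℝ, 1 ≤ u → u ≤ v → |v * deriv (fun v' : ℝ => F u v') v| ≤ v ^ (-σ) * u ^ (-z)) →
      ∀ u v : ℝ, 1 ≤ u → u ≤ v →
        |(∫ u' in (1:ℝ)..u, (F u' v - F u' u)) + ∫ v' in u..v, F u v'| ≤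
          C * (v - u) * v⁻¹ * u ^ (1 + max 0 (1 - z)) * (u ^ (1 - σ) + v ^ (1 - σ)) := by
  have h1σ : (0:ℝ) < |1 - σ| := abs_pos.mpr (sub_ne_zero.mpr (Ne.symm hσ))
  refine ⟨4 + 2 / |1 - σ|, ?_⟩
  intro F hFc hFd hsupp hb hdb u v hu huv
  have hu0 : (0:ℝ) < u := lt_of_lt_of_le zero_lt_one hu
  have hv1 : (1:ℝ) ≤ v := hu.trans huv
  have hv0 : (0:ℝ) < v := lt_of_lt_of_le zero_lt_one hv1
  set m : ℝ := u ^ (max 0 (1 - z)) with hm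
  set S : ℝ := u ^ (1 - σ) + v ^ (1 - σ) with hS
  have hmnn : 0 ≤ m := Real.rpow_nonneg hu0.le _
  have hSnn : 0 ≤ S := add_nonneg (Real.rpow_nonneg hu0.le _) (Real.rpow_nonneg hv0.le _)
  set P : ℝ := (v - u) * v⁻¹ * u ^ (1 + max 0 (1 - z)) * S with hP
  have hsplit : u ^ (1 + max 0 (1 - z)) = u * m := by
    rw [hm, Real.rpow_add hu0, Real.rpow_one]
  have hPnn : 0 ≤ P := by
    refine mul_nonneg (mul_nonneg (mul_nonneg (by linarith) (inv_nonneg.2 hv0.le)) ?_) hSnn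
    exact Real.rpow_nonneg hu0.le _
  -- u'^(-z) ≤ m for 1 ≤ u' ≤ u
  have hupow : ∀ u' : ℝ, 1 ≤ u' → u' ≤ u → u' ^ (-z) ≤ m := by
    intro u' h1 h2
    calc u' ^ (-z) ≤ u' ^ (max 0 (1 - z)) :=
          Real.rpow_le_rpow_of_exponent_le h1 (le_trans (by linarith) (le_max_right 0 (1 - z)))
      _ ≤ m := Real.rpow_le_rpow (by linarith) h2 (le_max_left 0 (1 - z))
  -- pointwise bound on the difference via the derivative
  have diffbound : ∀ u', 1 ≤ u' → u' ≤ u →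
      |F u' v - F u' u| ≤ ((u ^ (-σ - 1) + v ^ (-σ - 1)) * m) * |v - u| := by
    intro u' h1 h2
    have hFTC : ∫ s in u..v, deriv (fun v' => F u' v') s = F u' v - F u' u :=
      integral_deriv_eq_sub (fun x _ => ((hFd u').differentiable one_ne_zero).differentiableAt)
        (((hFd u').continuous_deriv le_rfl).intervalIntegrable u v)
    rw [← hFTC]
    rw [← Real.norm_eq_abs]
    apply intervalIntegral.norm_integral_le_of_norm_le_const
    intro s hs
    rw [Set.uIoc_of_le huv] at hs
    have hs0 : (0:ℝ) < s := lt_of_lt_of_le hu0 hs.1.le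
    have hd := hdb u' s h1 (le_trans h2 hs.1.le)
    rw [abs_mul, abs_of_pos hs0] at hd
    have hder : |deriv (fun v' => F u' v') s| ≤ s ^ (-σ - 1) * u' ^ (-z) := by
      have heq : s ^ (-σ - 1) * u' ^ (-z) = s ^ (-σ) * u' ^ (-z) / s := by
        rw [Real.rpow_sub hs0, Real.rpow_one]; ring
      rw [heq, le_div_iff₀ hs0]
      calc |deriv (fun v' => F u' v') s| * s = s * |deriv (fun v' => F u' v') s| := by ring
        _ ≤ s ^ (-σ) * u' ^ (-z) := hd
    rw [Real.norm_eq_abs]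
    calc |deriv (fun v' => F u' v') s| ≤ s ^ (-σ - 1) * u' ^ (-z) := hder
      _ ≤ (u ^ (-σ - 1) + v ^ (-σ - 1)) * m := by
          apply mul_le_mul (rpow_between' hu0 hs.1.le hs.2) (hupow u' h1 h2)
            (Real.rpow_nonneg (by linarith) _)
          exact add_nonneg (Real.rpow_nonneg hu0.le _) (Real.rpow_nonneg hv0.le _)
  -- pointwise bound on the difference via values
  have valbound : ∀ u', 1 ≤ u' → u' ≤ u →
      |F u' v - F u' u| ≤ (u ^ (-σ) + v ^ (-σ)) * m := by
    intro u' h1 h2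
    calc |F u' v - F u' u| ≤ |F u' v| + |F u' u| := abs_sub _ _
      _ ≤ v ^ (-σ) * u' ^ (-z) + u ^ (-σ) * u' ^ (-z) :=
          add_le_add (hb u' v h1 (h2.trans huv)) (hb u' u h1 h2)
      _ = (u ^ (-σ) + v ^ (-σ)) * u' ^ (-z) := by ring
      _ ≤ (u ^ (-σ) + v ^ (-σ)) * m := by
          apply mul_le_mul_of_nonneg_left (hupow u' h1 h2)
          exact add_nonneg (Real.rpow_nonneg hu0.le _) (Real.rpow_nonneg hv0.le _)
  have habsvu : |v - u| = v - u := abs_of_nonneg (by linarith)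
  have habsu1 : |u - 1| = u - 1 := abs_of_nonneg (by linarith)
  -- Term 1 bound
  have hT1 : |∫ u' in (1:ℝ)..u, (F u' v - F u' u)| ≤ 2 * P := by
    rcases le_or_gt v (2 * u) with hcase | hcase
    · -- near regime: use derivative bound
      have hAB : u ^ (-σ - 1) + v ^ (-σ - 1) ≤ 2 * v⁻¹ * S := by
        have hA : v * u ^ (-σ - 1) ≤ 2 * u ^ (1 - σ) := by
          have h1 : u * u ^ (-σ - 1) = u ^ (-σ) := by
            rw [show (-σ) = -σ - 1 + 1 by ring, Real.rpow_add_one hu0.ne']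
            ring
          have h2 : u ^ (-σ) ≤ u ^ (1 - σ) :=
            Real.rpow_le_rpow_of_exponent_le hu (by linarith)
          have h3 : v * u ^ (-σ - 1) ≤ 2 * u * u ^ (-σ - 1) :=
            mul_le_mul_of_nonneg_right hcase (Real.rpow_nonneg hu0.le _)
          calc v * u ^ (-σ - 1) ≤ 2 * (u * u ^ (-σ - 1)) := by linarith
            _ = 2 * u ^ (-σ) := by rw [h1]
            _ ≤ 2 * u ^ (1 - σ) := by linarith
        have hB : v * v ^ (-σ - 1) ≤ 2 * v ^ (1 - σ) := by
          have h1 : v * v ^ (-σ - 1) = v ^ (-σ) := by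
            rw [show (-σ) = -σ - 1 + 1 by ring, Real.rpow_add_one hv0.ne']
            ring
          have h3 : (0:ℝ) ≤ v ^ (1 - σ) := Real.rpow_nonneg hv0.le _
          have h2 : v ^ (-σ) ≤ v ^ (1 - σ) :=
            Real.rpow_le_rpow_of_exponent_le hv1 (by linarith)
          linarith
        have hsum : v * (u ^ (-σ - 1) + v ^ (-σ - 1)) ≤ 2 * S := by
          rw [hS]; nlinarith
        have := mul_le_mul_of_nonneg_left hsum (inv_nonneg.2 hv0.le)
        calc u ^ (-σ - 1) + v ^ (-σ - 1)
            = v⁻¹ * (v * (u ^ (-σ - 1) + v ^ (-σ - 1))) := by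
              field_simp
          _ ≤ v⁻¹ * (2 * S) := this
          _ = 2 * v⁻¹ * S := by ring
      have hle : |∫ u' in (1:ℝ)..u, (F u' v - F u' u)| ≤
          (((u ^ (-σ - 1) + v ^ (-σ - 1)) * m) * |v - u|) * |u - 1| := by
        rw [← Real.norm_eq_abs (∫ u' in (1:ℝ)..u, (F u' v - F u' u))]
        apply intervalIntegral.norm_integral_le_of_norm_le_const
        intro x hx
        rw [Set.uIoc_of_le hu] at hx
        rw [Real.norm_eq_abs]
        exact diffbound x hx.1.le hx.2
      have hXnn : 0 ≤ (u ^ (-σ - 1) + v ^ (-σ - 1)) * m :=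
        mul_nonneg (add_nonneg (Real.rpow_nonneg hu0.le _) (Real.rpow_nonneg hv0.le _)) hmnn
      rw [habsvu, habsu1] at hle
      have step1 : ((u ^ (-σ - 1) + v ^ (-σ - 1)) * m) * (v - u) * (u - 1) ≤
          ((u ^ (-σ - 1) + v ^ (-σ - 1)) * m) * (v - u) * u := by
        apply mul_le_mul_of_nonneg_left (by linarith)
        exact mul_nonneg hXnn (by linarith)
      have step2 : ((u ^ (-σ - 1) + v ^ (-σ - 1)) * m) * (v - u) * u ≤
          (2 * v⁻¹ * S) * m * (v - u) * u := by
        have := mul_le_mul_of_nonneg_right hAB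
          (mul_nonneg (mul_nonneg hmnn (by linarith : (0:ℝ) ≤ v - u)) hu0.le)
        calc ((u ^ (-σ - 1) + v ^ (-σ - 1)) * m) * (v - u) * u
            = (u ^ (-σ - 1) + v ^ (-σ - 1)) * (m * (v - u) * u) := by ring
          _ ≤ (2 * v⁻¹ * S) * (m * (v - u) * u) := this
          _ = (2 * v⁻¹ * S) * m * (v - u) * u := by ring
      have : (2 * v⁻¹ * S) * m * (v - u) * u = 2 * P := by
        rw [hP, hsplit]; ring
      linarith
    · -- far regime: use value bound
      have hhalf : 1 ≤ 2 * ((v - u) * v⁻¹) := by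
        rw [show 2 * ((v - u) * v⁻¹) = (2 * (v - u)) / v by ring, le_div_iff₀ hv0]
        linarith
      have hle : |∫ u' in (1:ℝ)..u, (F u' v - F u' u)| ≤
          ((u ^ (-σ) + v ^ (-σ)) * m) * |u - 1| := by
        rw [← Real.norm_eq_abs (∫ u' in (1:ℝ)..u, (F u' v - F u' u))]
        apply intervalIntegral.norm_integral_le_of_norm_le_const
        intro x hx
        rw [Set.uIoc_of_le hu] at hx
        rw [Real.norm_eq_abs]
        exact valbound x hx.1.le hx.2
      rw [habsu1] at hle
      have hsle : u ^ (-σ) + v ^ (-σ) ≤ S := by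
        rw [hS]
        exact add_le_add (Real.rpow_le_rpow_of_exponent_le hu (by linarith))
          (Real.rpow_le_rpow_of_exponent_le hv1 (by linarith))
      have step1 : ((u ^ (-σ) + v ^ (-σ)) * m) * (u - 1) ≤ (S * m) * u := by
        apply mul_le_mul (mul_le_mul_of_nonneg_right hsle hmnn) (by linarith) (by linarith)
        exact mul_nonneg hSnn hmnn
      have step2 : (S * m) * u ≤ ((S * m) * u) * (2 * ((v - u) * v⁻¹)) :=
        le_mul_of_one_le_right (mul_nonneg (mul_nonneg hSnn hmnn) hu0.le) hhalf
      have heq : ((S * m) * u) * (2 * ((v - u) * v⁻¹)) = 2 * P := by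
        rw [hP, hsplit]; ring
      exact hle.trans (step1.trans (step2.trans heq.le))
  -- Term 2 bound
  have hFint : IntervalIntegrable (fun v' => F u v') volume u v :=
    ((hFd u).continuous).intervalIntegrable u v
  have hT2 : |∫ v' in u..v, F u v'| ≤ (2 + 2 / |1 - σ|) * P := by
    have hhalf : 1 ≤ 2 * ((v - u) * v⁻¹) → True := fun _ => trivial
    rcases le_or_gt v (2 * u) with hcase | hcase
    · -- near regime: sup bound
      have hle : |∫ v' in u..v, F u v'| ≤
          ((u ^ (-σ) + v ^ (-σ)) * u ^ (-z)) * |v - u| := by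
        rw [← Real.norm_eq_abs (∫ v' in u..v, F u v')]
        apply intervalIntegral.norm_integral_le_of_norm_le_const
        intro x hx
        rw [Set.uIoc_of_le huv] at hx
        rw [Real.norm_eq_abs]
        calc |F u x| ≤ x ^ (-σ) * u ^ (-z) := hb u x hu hx.1.le
          _ ≤ (u ^ (-σ) + v ^ (-σ)) * u ^ (-z) :=
              mul_le_mul_of_nonneg_right (rpow_between' hu0 hx.1.le hx.2)
                (Real.rpow_nonneg hu0.le _)
      rw [habsvu] at hle
      have hAB2 : u ^ (-σ) + v ^ (-σ) ≤ 2 * v⁻¹ * (u * S) := by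
        have hA2 : v * u ^ (-σ) ≤ 2 * (u * u ^ (1 - σ)) := by
          have h1 : u * u ^ (-σ) = u ^ (1 - σ) := by
            rw [show (1 - σ) = -σ + 1 by ring, Real.rpow_add_one hu0.ne']
            ring
          have h2 : v * u ^ (-σ) ≤ 2 * u * u ^ (-σ) :=
            mul_le_mul_of_nonneg_right hcase (Real.rpow_nonneg hu0.le _)
          have h3 : u ^ (1 - σ) ≤ u * u ^ (1 - σ) :=
            le_mul_of_one_le_left (Real.rpow_nonneg hu0.le _) hu
          calc v * u ^ (-σ) ≤ 2 * (u * u ^ (-σ)) := by linarith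
            _ = 2 * u ^ (1 - σ) := by rw [h1]
            _ ≤ 2 * (u * u ^ (1 - σ)) := by linarith
        have hB2 : v * v ^ (-σ) ≤ 2 * (u * v ^ (1 - σ)) := by
          have h1 : v * v ^ (-σ) = v ^ (1 - σ) := by
            rw [show (1 - σ) = -σ + 1 by ring, Real.rpow_add_one hv0.ne']
            ring
          have h3 : v ^ (1 - σ) ≤ 2 * (u * v ^ (1 - σ)) := by
            nlinarith [Real.rpow_nonneg hv0.le (1 - σ)]
          linarith
        have hsum : v * (u ^ (-σ) + v ^ (-σ)) ≤ 2 * (u * S) := by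
          rw [hS]; nlinarith
        have hmul := mul_le_mul_of_nonneg_left hsum (inv_nonneg.2 hv0.le)
        calc u ^ (-σ) + v ^ (-σ)
            = v⁻¹ * (v * (u ^ (-σ) + v ^ (-σ))) := by field_simp
          _ ≤ v⁻¹ * (2 * (u * S)) := hmul
          _ = 2 * v⁻¹ * (u * S) := by ring
      have hz2 : u ^ (-z) ≤ m := hupow u hu le_rfl
      have hsnn : 0 ≤ u ^ (-σ) + v ^ (-σ) :=
        add_nonneg (Real.rpow_nonneg hu0.le _) (Real.rpow_nonneg hv0.le _)
      have step1 : ((u ^ (-σ) + v ^ (-σ)) * u ^ (-z)) * (v - u) ≤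
          ((u ^ (-σ) + v ^ (-σ)) * m) * (v - u) := by
        apply mul_le_mul_of_nonneg_right (mul_le_mul_of_nonneg_left hz2 hsnn) (by linarith)
      have step2 : ((u ^ (-σ) + v ^ (-σ)) * m) * (v - u) ≤
          ((2 * v⁻¹ * (u * S)) * m) * (v - u) := by
        apply mul_le_mul_of_nonneg_right (mul_le_mul_of_nonneg_right hAB2 hmnn) (by linarith)
      have heq : ((2 * v⁻¹ * (u * S)) * m) * (v - u) = 2 * P := by
        rw [hP, hsplit]; ring
      have hfin : |∫ v' in u..v, F u v'| ≤ 2 * P := by linarith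
      have : 2 * P ≤ (2 + 2 / |1 - σ|) * P := by
        apply mul_le_mul_of_nonneg_right _ hPnn
        have : 0 ≤ 2 / |1 - σ| := by positivity
        linarith
      linarith
    · -- far regime: integrate the bound
      have hhalf2 : 1 ≤ 2 * ((v - u) * v⁻¹) := by
        rw [show 2 * ((v - u) * v⁻¹) = (2 * (v - u)) / v by ring, le_div_iff₀ hv0]
        linarith
      have hgint : IntervalIntegrable (fun x : ℝ => x ^ (-σ) * u ^ (-z)) volume u v := by
        apply ContinuousOn.intervalIntegrable
        intro x hx
        rw [Set.uIcc_of_le huv] at hx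
        exact ((Real.continuousAt_rpow_const x (-σ)
          (Or.inl (by nlinarith [hx.1] : x ≠ 0))).continuousWithinAt).mul
          continuousWithinAt_const
      have h1 : |∫ v' in u..v, F u v'| ≤ ∫ v' in u..v, |F u v'| :=
        intervalIntegral.abs_integral_le_integral_abs huv
      have h2 : (∫ v' in u..v, |F u v'|) ≤ ∫ v' in u..v, v' ^ (-σ) * u ^ (-z) :=
        intervalIntegral.integral_mono_on huv hFint.abs hgint
          (fun x hx => hb u x hu hx.1)
      have h3 : (∫ v' in u..v, v' ^ (-σ) * u ^ (-z)) =
          (v ^ (1 - σ) - u ^ (1 - σ)) / (1 - σ) * u ^ (-z) := by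
        rw [intervalIntegral.integral_mul_const,
          integral_rpow (Or.inr ⟨by intro h; apply hσ; linarith, by
            rw [Set.uIcc_of_le huv]; intro h; have := h.1; linarith⟩)]
        rw [show -σ + 1 = 1 - σ by ring]
      have h4 : (v ^ (1 - σ) - u ^ (1 - σ)) / (1 - σ) ≤ S / |1 - σ| := by
        calc (v ^ (1 - σ) - u ^ (1 - σ)) / (1 - σ)
            ≤ |(v ^ (1 - σ) - u ^ (1 - σ)) / (1 - σ)| := le_abs_self _
          _ = |v ^ (1 - σ) - u ^ (1 - σ)| / |1 - σ| := abs_div _ _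
          _ ≤ S / |1 - σ| := by
              apply div_le_div_of_nonneg_right ?_ h1σ.le
              have habs : |v ^ (1 - σ) - u ^ (1 - σ)| ≤ |v ^ (1 - σ)| + |u ^ (1 - σ)| :=
                abs_sub _ _
              rw [abs_of_nonneg (Real.rpow_nonneg hv0.le _),
                abs_of_nonneg (Real.rpow_nonneg hu0.le _)] at habs
              rw [hS]; linarith
      have hznn : 0 ≤ u ^ (-z) := Real.rpow_nonneg hu0.le _
      have h5 : (v ^ (1 - σ) - u ^ (1 - σ)) / (1 - σ) * u ^ (-z) ≤
          (S / |1 - σ|) * u ^ (-z) := mul_le_mul_of_nonneg_right h4 hznn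
      have h6 : u ^ (-z) ≤ u ^ (1 + max 0 (1 - z)) := by
        apply Real.rpow_le_rpow_of_exponent_le hu
        have := le_max_right 0 (1 - z)
        linarith
      have hdnn : 0 ≤ S / |1 - σ| := div_nonneg hSnn h1σ.le
      have h7 : (S / |1 - σ|) * u ^ (-z) ≤ (S / |1 - σ|) * u ^ (1 + max 0 (1 - z)) :=
        mul_le_mul_of_nonneg_left h6 hdnn
      have h8 : (S / |1 - σ|) * u ^ (1 + max 0 (1 - z)) ≤
          ((S / |1 - σ|) * u ^ (1 + max 0 (1 - z))) * (2 * ((v - u) * v⁻¹)) :=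
        le_mul_of_one_le_right (mul_nonneg hdnn (Real.rpow_nonneg hu0.le _)) hhalf2
      have heq : ((S / |1 - σ|) * u ^ (1 + max 0 (1 - z))) * (2 * ((v - u) * v⁻¹)) =
          (2 / |1 - σ|) * P := by
        rw [hP]; ring
      have hfin : |∫ v' in u..v, F u v'| ≤ (2 / |1 - σ|) * P := by
        rw [h3] at h2; linarith
      have : (2 / |1 - σ|) * P ≤ (2 + 2 / |1 - σ|) * P := by
        apply mul_le_mul_of_nonneg_right _ hPnn
        linarith
      linarith
  -- combine
  calc |(∫ u' in (1:ℝ)..u, (F u' v - F u' u)) + ∫ v' in u..v, F u v'|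
      ≤ |∫ u' in (1:ℝ)..u, (F u' v - F u' u)| + |∫ v' in u..v, F u v'| := abs_add_le _ _
    _ ≤ 2 * P + (2 + 2 / |1 - σ|) * P := add_le_add hT1 hT2
    _ = (4 + 2 / |1 - σ|) * (v - u) * v⁻¹ * u ^ (1 + max 0 (1 - z)) * S := by
        rw [hP]; ring
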